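/- arXiv:2503.11526 — 8 statements merged into one kernel-verified Lean document; each statement's English description precedes it below -/
import Mathlib

section
/- Let v ∈ V, let i ∈ win⁻_v, and let x = next_v(i). Then i ∈ win⁻_x and next_x(i) = x. -/
open Finset
open scoped Classical

noncomputable section

variable {V : Type} [Fintype V] [PartialOrder V]

/-- The chain `T[v,i]` : all vertices `p` with `v ≤ p ≤ i`. -/
def chainCC (v i : V) : Finset V := univ.filter (fun p => v ≤ p ∧ p ≤ i)

/-- The chain `T[v,i)` : `T[v,i]` without `i`. -/
def chainCO (v i : V) : Finset V := (chainCC v i).erase i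

/-- `u` is s-maximal in `T_v`. -/
def SMax (s : V → ℝ) (v u : V) : Prop := v ≤ u ∧ ∀ p ∈ chainCO v u, s p < s u

/-- The window of `v`. -/
def win (w : V → ℝ) (w0 : ℝ) (v : V) : Finset V :=
  univ.filter (fun i => v ≤ i ∧ ∑ j ∈ chainCC v i, w j ≤ w0)

/-- `win*_v`: the s-maximal vertices of the window of `v`. -/
def winStar (w : V → ℝ) (w0 : ℝ) (s : V → ℝ) (v : V) : Finset V :=
  (win w w0 v).filter (fun i => SMax s v i)

/-- `win⁻_v = win_v \ win*_v`. -/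
def winMinus (w : V → ℝ) (w0 : ℝ) (s : V → ℝ) (v : V) : Finset V :=
  win w w0 v \ winStar w w0 s v

/-- `next_v(u)`: the greatest (closest to `u`) s-maximal element of `T[v,u)`,
if such a greatest element exists (junk value `v` otherwise). -/
def nxt (s : V → ℝ) (v u : V) : V :=
  if h : ∃ x ∈ chainCO v u, SMax s v x ∧ ∀ y ∈ chainCO v u, SMax s v y → y ≤ x
  then h.choose else v

end

section Aux
variable {V : Type} [Fintype V] [PartialOrder V]

lemma mem_chainCO' {v i p : V} : p ∈ chainCO v i ↔ v ≤ p ∧ p ≤ i ∧ p ≠ i := by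
  simp only [chainCO, chainCC, Finset.mem_erase, Finset.mem_filter, Finset.mem_univ, true_and]
  tauto

lemma smax_self (s : V → ℝ) (v : V) : SMax s v v := by
  refine ⟨le_refl v, fun p hp => ?_⟩
  rw [mem_chainCO'] at hp
  exact absurd (le_antisymm hp.2.1 hp.1) hp.2.2

lemma nxt_prop {s : V → ℝ} {v i : V}
    (hex : ∃ x ∈ chainCO v i, SMax s v x ∧ ∀ y ∈ chainCO v i, SMax s v y → y ≤ x) :
    nxt s v i ∈ chainCO v i ∧ SMax s v (nxt s v i) ∧
      ∀ y ∈ chainCO v i, SMax s v y → y ≤ nxt s v i := by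
  rw [nxt, dif_pos hex]
  obtain ⟨h1, h2, h3⟩ := hex.choose_spec
  exact ⟨h1, h2, h3⟩

lemma chain_exists (htree : ∀ a b c : V, a ≤ c → b ≤ c → a ≤ b ∨ b ≤ a)
    (s : V → ℝ) {v i : V} (hvi : v ≤ i) (hne : v ≠ i) :
    ∃ x ∈ chainCO v i, SMax s v x ∧ ∀ y ∈ chainCO v i, SMax s v y → y ≤ x := by
  classical
  set S : Finset V := (chainCO v i).filter (fun y => SMax s v y) with hS
  have hvS : v ∈ S := by
    rw [hS, Finset.mem_filter]
    exact ⟨mem_chainCO'.2 ⟨le_refl v, hvi, hne⟩, smax_self s v⟩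
  obtain ⟨m, hmS, hmax⟩ := S.exists_maximal ⟨v, hvS⟩
  rw [hS, Finset.mem_filter] at hmS
  refine ⟨m, hmS.1, hmS.2, fun y hy hsy => ?_⟩
  have hyS : y ∈ S := Finset.mem_filter.2 ⟨hy, hsy⟩
  have h1 := (mem_chainCO'.1 hy).2.1
  have h2 := (mem_chainCO'.1 hmS.1).2.1
  rcases htree y m i h1 h2 with h | h
  · exact h
  · rcases eq_or_lt_of_le h with h | h
    · exact h.ge
    · exact (lt_irrefl m (lt_of_lt_of_le h (hmax hyS h.le))).elim

end Aux

theorem stmt_0 (V : Type) [Fintype V] [Nonempty V] [PartialOrder V]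
    (htree : ∀ a b c : V, a ≤ c → b ≤ c → a ≤ b ∨ b ≤ a)
    (w : V → ℝ) (s : V → ℝ) (w0 : ℝ)
    (hw : ∀ i : V, 0 ≤ w i) (hw0 : 0 ≤ w0)
    (v i : V) (hi : i ∈ winMinus w w0 s v)
    (x : V) (hx : x = nxt s v i) :
    i ∈ winMinus w w0 s x ∧ nxt s x i = x := by
  classical
  rw [winMinus, Finset.mem_sdiff] at hi
  obtain ⟨hiw, hnstar⟩ := hi
  have hiw' := hiw
  rw [win, Finset.mem_filter] at hiw'
  obtain ⟨-, hvi, hsum⟩ := hiw'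
  have hnsm : ¬ SMax s v i := by
    intro h
    exact hnstar (Finset.mem_filter.2 ⟨hiw, h⟩)
  have hvne : v ≠ i := by
    rintro rfl; exact hnsm (smax_self s v)
  have hex := chain_exists htree s hvi hvne
  obtain ⟨hxmem, hxsm, hxmax⟩ := nxt_prop hex
  rw [← hx] at hxmem hxsm hxmax
  obtain ⟨hvx, hxi, hxne⟩ := mem_chainCO'.1 hxmem
  -- key claim: p with x ≤ p ≤ i, p ≠ x, SMax s x p → SMax s v p
  have key : ∀ p : V, x ≤ p → p ≤ i → p ≠ x → SMax s x p → SMax s v p := by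
    intro p hxp hpi hpx ⟨_, hsp⟩
    refine ⟨le_trans hvx hxp, fun q hq => ?_⟩
    obtain ⟨hvq, hqp, hqp'⟩ := mem_chainCO'.1 hq
    have hsxp : s x < s p := hsp x (mem_chainCO'.2 ⟨le_refl x, hxp, Ne.symm hpx⟩)
    rcases htree q x p hqp hxp with h | h
    · rcases eq_or_lt_of_le h with h | h
      · rw [h]; exact hsxp
      · exact lt_trans (hxsm.2 q (mem_chainCO'.2 ⟨hvq, h.le, h.ne⟩)) hsxp
    · exact hsp q (mem_chainCO'.2 ⟨h, hqp, hqp'⟩)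
  -- i ∈ win x
  have hiwx : i ∈ win w w0 x := by
    rw [win, Finset.mem_filter]
    refine ⟨Finset.mem_univ i, hxi, le_trans ?_ hsum⟩
    apply Finset.sum_le_sum_of_subset_of_nonneg
    · intro p hp
      simp only [chainCC, Finset.mem_filter, Finset.mem_univ, true_and] at hp ⊢
      exact ⟨le_trans hvx hp.1, hp.2⟩
    · intro p _ _; exact hw p
  -- i not SMax in T_x
  have hinsmx : ¬ SMax s x i := by
    intro h
    exact hnsm (key i hxi (le_refl i) (Ne.symm hxne) h)
  have h1 : i ∈ winMinus w w0 s x := by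
    rw [winMinus, Finset.mem_sdiff]
    refine ⟨hiwx, fun h => hinsmx (Finset.mem_filter.1 h).2⟩
  refine ⟨h1, ?_⟩
  -- nxt s x i = x
  have hgreat : ∀ z ∈ chainCO x i, SMax s x z → z ≤ x := by
    intro z hz hsz
    obtain ⟨hxz, hzi, hzi'⟩ := mem_chainCO'.1 hz
    by_contra hzx
    have hzx' : z ≠ x := fun h => hzx (h.le)
    have hsmv : SMax s v z := key z hxz hzi hzx' hsz
    exact hzx (hxmax z (mem_chainCO'.2 ⟨le_trans hvx hxz, hzi, hzi'⟩) hsmv)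
  have hxmem' : x ∈ chainCO x i := mem_chainCO'.2 ⟨le_refl x, hxi, hxne⟩
  have hexx : ∃ y ∈ chainCO x i, SMax s x y ∧ ∀ z ∈ chainCO x i, SMax s x z → z ≤ y :=
    ⟨x, hxmem', smax_self s x, hgreat⟩
  obtain ⟨hn1, hn2, hn3⟩ := nxt_prop hexx
  exact le_antisymm (hgreat _ hn1 hn2) (hn3 x hxmem' (smax_self s x))
end

section
/- Let v ∈ V, let i ∈ win⁻_v, let x = next_v(i), and let F : V → ℝ be an arbitrary function. Then cost_F(v,i) − cost_F(x,i) = cost_F(v,x) − cost_F(x,x). (All four quantities are well-defined: x ∈ win*_v, x ∈ win*_x, and i ∈ win⁻_x with next_x(i) = x.) -/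
open Finset
open scoped Classical

noncomputable section

variable {V : Type} [Fintype V] [PartialOrder V]

/-- `p` is the parent of `j`. -/
def IsParent (p j : V) : Prop := p < j ∧ ¬ ∃ q, p < q ∧ q < j

/-- The vertices `j` outside `T[v,i]` whose parent lies in `T[v,i]`. -/
def branchOff (v i : V) : Finset V :=
  univ.filter (fun j => j ∉ chainCC v i ∧ ∃ p ∈ chainCC v i, IsParent p j)

/-- `sum_F(v,i) = Σ F(j)` over `j ∉ T[v,i]` whose parent lies in `T[v,i]`. -/
def sumF (F : V → ℝ) (v i : V) : ℝ := ∑ j ∈ branchOff v i, F j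

/-- `cost_F(v,i)`: `sum_F(v,i) + s_i` if `i ∈ win*_v`, and
`sum_F(v,i) + s_{next_v(i)}` otherwise (in particular for `i ∈ win⁻_v`). -/
def costF (w : V → ℝ) (w0 : ℝ) (s : V → ℝ) (F : V → ℝ) (v i : V) : ℝ :=
  if i ∈ winStar w w0 s v then sumF F v i + s i else sumF F v i + s (nxt s v i)

end
section Aux

variable {V : Type} [Fintype V] [PartialOrder V]

lemma mem_chainCC_iff {v i p : V} : p ∈ chainCC v i ↔ v ≤ p ∧ p ≤ i := by
  simp [chainCC]

lemma mem_chainCO_iff {v i p : V} : p ∈ chainCO v i ↔ p ≠ i ∧ v ≤ p ∧ p ≤ i := by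
  simp [chainCO, mem_chainCC_iff, Finset.mem_erase]

lemma mem_branchOff_iff {v i j : V} :
    j ∈ branchOff v i ↔ j ∉ chainCC v i ∧ ∃ p ∈ chainCC v i, IsParent p j := by
  simp [branchOff]

lemma parent_unique (htree : ∀ a b c : V, a ≤ c → b ≤ c → a ≤ b ∨ b ≤ a)
    {p q j : V} (hp : IsParent p j) (hq : IsParent q j) : p = q := by
  rcases htree p q j hp.1.le hq.1.le with h | h
  · rcases h.lt_or_eq with h' | h'
    · exact absurd ⟨q, h', hq.1⟩ hp.2
    · exact h'
  · rcases h.lt_or_eq with h' | h'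
    · exact absurd ⟨p, h', hp.1⟩ hq.2
    · exact h'.symm

end Aux

theorem stmt_1 (V : Type) [Fintype V] [Nonempty V] [PartialOrder V]
    (htree : ∀ a b c : V, a ≤ c → b ≤ c → a ≤ b ∨ b ≤ a)
    (w : V → ℝ) (s : V → ℝ) (w0 : ℝ)
    (hw : ∀ i : V, 0 ≤ w i) (hw0 : 0 ≤ w0)
    (v i : V) (hi : i ∈ winMinus w w0 s v)
    (x : V) (hx : x = nxt s v i)
    (F : V → ℝ) :
    x ∈ winStar w w0 s v ∧ x ∈ winStar w w0 s x ∧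
    i ∈ winMinus w w0 s x ∧ nxt s x i = x ∧
    costF w w0 s F v i - costF w w0 s F x i
      = costF w w0 s F v x - costF w w0 s F x x := by
  -- unpack hi
  have hiwin : i ∈ win w w0 v := (Finset.mem_sdiff.1 hi).1
  have hiNotStar : i ∉ winStar w w0 s v := (Finset.mem_sdiff.1 hi).2
  have hvi : v ≤ i := (Finset.mem_filter.1 hiwin).2.1
  have hsum_vi : ∑ j ∈ chainCC v i, w j ≤ w0 := (Finset.mem_filter.1 hiwin).2.2
  have hiNotSMax : ¬ SMax s v i := by
    intro h
    exact hiNotStar (Finset.mem_filter.2 ⟨hiwin, h⟩)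
  have hvne : v ≠ i := by
    rintro rfl
    exact hiNotSMax (smax_self s v)
  -- existence of the greatest s-maximal element of T[v,i)
  have hex : ∃ x ∈ chainCO v i, SMax s v x ∧ ∀ y ∈ chainCO v i, SMax s v y → y ≤ x := by
    classical
    set S : Finset V := (chainCO v i).filter (fun u => SMax s v u) with hS
    have hvS : v ∈ S := by
      refine Finset.mem_filter.2 ⟨mem_chainCO_iff.2 ⟨hvne, le_rfl, hvi⟩, smax_self s v⟩
    obtain ⟨m, hm, hmax⟩ := S.exists_maximal ⟨v, hvS⟩
    have hm1 : m ∈ chainCO v i := (Finset.mem_filter.1 hm).1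
    have hm2 : SMax s v m := (Finset.mem_filter.1 hm).2
    refine ⟨m, hm1, hm2, fun y hy hsy => ?_⟩
    have hyS : y ∈ S := Finset.mem_filter.2 ⟨hy, hsy⟩
    have hyi : y ≤ i := (mem_chainCO_iff.1 hy).2.2
    have hmi : m ≤ i := (mem_chainCO_iff.1 hm1).2.2
    rcases htree y m i hyi hmi with h | h
    · exact h
    · rcases h.lt_or_eq with h' | h'
      · exact absurd h' (not_lt_of_ge (hmax hyS h'.le))
      · exact h'.ge
  have hnxt_eq : nxt s v i = hex.choose := by
    rw [nxt]; exact dif_pos hex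
  have hxc : x = hex.choose := hx.trans hnxt_eq
  obtain ⟨hx1, hx2, hx3⟩ : x ∈ chainCO v i ∧ SMax s v x ∧
      ∀ y ∈ chainCO v i, SMax s v y → y ≤ x := by
    rw [hxc]; exact ⟨hex.choose_spec.1, hex.choose_spec.2.1, hex.choose_spec.2.2⟩
  obtain ⟨hxni, hvx, hxi⟩ := mem_chainCO_iff.1 hx1
  -- s x is the maximum of s on T[v,i)
  have hsmax : ∀ p ∈ chainCO v i, s p ≤ s x := by
    by_contra h
    push_neg at h
    obtain ⟨p, hp, hsp⟩ := h
    classical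
    set B : Finset V := (chainCO v i).filter (fun q => s x < s q) with hB
    obtain ⟨m, hm, hmmin⟩ := B.exists_minimal ⟨p, Finset.mem_filter.2 ⟨hp, hsp⟩⟩
    have hm1 : m ∈ chainCO v i := (Finset.mem_filter.1 hm).1
    have hm2 : s x < s m := (Finset.mem_filter.1 hm).2
    obtain ⟨hmni, hvm, hmi⟩ := mem_chainCO_iff.1 hm1
    have hsm : SMax s v m := by
      refine ⟨hvm, fun q hq => ?_⟩
      obtain ⟨hqm', hvq, hqm⟩ := mem_chainCO_iff.1 hq
      have hqi : q ∈ chainCO v i := by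
        refine mem_chainCO_iff.2 ⟨?_, hvq, hqm.trans hmi⟩
        rintro rfl
        exact hmni (le_antisymm hmi hqm)
      by_contra hq'
      push_neg at hq'
      have hqB : q ∈ B := Finset.mem_filter.2 ⟨hqi, lt_of_lt_of_le hm2 hq'⟩
      exact (lt_of_le_of_ne hqm hqm').not_ge (hmmin hqB hqm)
    have hmx : m ≤ x := hx3 m hm1 hsm
    rcases hmx.lt_or_eq with h' | h'
    · have : m ∈ chainCO v x := mem_chainCO_iff.2 ⟨h'.ne, hvm, hmx⟩
      exact absurd (hx2.2 m this) (not_lt.2 hm2.le)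
    · rw [h'] at hm2; exact lt_irrefl _ hm2
  -- s i ≤ s x
  have hsix : s i ≤ s x := by
    have : ¬ ∀ p ∈ chainCO v i, s p < s i := fun h => hiNotSMax ⟨hvi, h⟩
    push_neg at this
    obtain ⟨p, hp, hpi⟩ := this
    exact le_trans hpi (hsmax p hp)
  -- subsets of chains and window sums
  have hsub_vx : chainCC v x ⊆ chainCC v i := by
    intro p hp
    obtain ⟨h1, h2⟩ := mem_chainCC_iff.1 hp
    exact mem_chainCC_iff.2 ⟨h1, h2.trans hxi⟩
  have hsub_xi : chainCC x i ⊆ chainCC v i := by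
    intro p hp
    obtain ⟨h1, h2⟩ := mem_chainCC_iff.1 hp
    exact mem_chainCC_iff.2 ⟨hvx.trans h1, h2⟩
  have hsub_xx : chainCC x x ⊆ chainCC v i := by
    intro p hp
    obtain ⟨h1, h2⟩ := mem_chainCC_iff.1 hp
    exact mem_chainCC_iff.2 ⟨hvx.trans h1, h2.trans hxi⟩
  have hsum_of_sub : ∀ {t : Finset V}, t ⊆ chainCC v i → ∑ j ∈ t, w j ≤ w0 := by
    intro t ht
    exact le_trans (Finset.sum_le_sum_of_subset_of_nonneg ht (fun j _ _ => hw j)) hsum_vi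
  -- memberships
  have hxStar_v : x ∈ winStar w w0 s v := by
    refine Finset.mem_filter.2 ⟨?_, hx2⟩
    exact Finset.mem_filter.2 ⟨Finset.mem_univ _, hvx, hsum_of_sub hsub_vx⟩
  have hxStar_x : x ∈ winStar w w0 s x := by
    refine Finset.mem_filter.2 ⟨?_, smax_self s x⟩
    exact Finset.mem_filter.2 ⟨Finset.mem_univ _, le_rfl, hsum_of_sub hsub_xx⟩
  have hxlti : x < i := lt_of_le_of_ne hxi hxni
  have hiwin_x : i ∈ win w w0 x :=
    Finset.mem_filter.2 ⟨Finset.mem_univ _, hxi, hsum_of_sub hsub_xi⟩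
  have hiNotStar_x : i ∉ winStar w w0 s x := by
    intro h
    have hsm : SMax s x i := (Finset.mem_filter.1 h).2
    have : s x < s i := hsm.2 x (mem_chainCO_iff.2 ⟨hxni, le_rfl, hxi⟩)
    exact absurd hsix (not_le.2 this)
  have hiMinus_x : i ∈ winMinus w w0 s x := Finset.mem_sdiff.2 ⟨hiwin_x, hiNotStar_x⟩
  -- nxt s x i = x
  have hclaim : ∀ y ∈ chainCO x i, SMax s x y → y ≤ x := by
    intro y hy hsy
    obtain ⟨hyni, hxy, hyi⟩ := mem_chainCO_iff.1 hy
    rcases eq_or_ne y x with rfl | hne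
    · exact le_rfl
    · have hyCO : y ∈ chainCO v i := mem_chainCO_iff.2 ⟨hyni, hvx.trans hxy, hyi⟩
      have h1 : s y ≤ s x := hsmax y hyCO
      have h2 : s x < s y := hsy.2 x (mem_chainCO_iff.2 ⟨Ne.symm hne, le_rfl, hxy⟩)
      exact absurd h1 (not_le.2 h2)
  have hxCO_x : x ∈ chainCO x i := mem_chainCO_iff.2 ⟨hxni, le_rfl, hxi⟩
  have hex2 : ∃ z ∈ chainCO x i, SMax s x z ∧ ∀ y ∈ chainCO x i, SMax s x y → y ≤ z :=
    ⟨x, hxCO_x, smax_self s x, hclaim⟩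
  have hnxt2 : nxt s x i = x := by
    have h1 : nxt s x i = hex2.choose := by rw [nxt]; exact dif_pos hex2
    obtain ⟨hc1, hc2, hc3⟩ := hex2.choose_spec
    rw [h1]
    exact le_antisymm (hclaim _ hc1 hc2) (hc3 x hxCO_x (smax_self s x))
  -- branch-off set identities
  have hcomp : ∀ a b : V, a ≤ i → b ≤ i → a ≤ b ∨ b ≤ a := fun a b ha hb => htree a b i ha hb
  have hU : branchOff v i ∪ branchOff x x = branchOff v x ∪ branchOff x i := by
    ext j
    simp only [Finset.mem_union, mem_branchOff_iff, mem_chainCC_iff]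
    constructor
    · rintro (⟨hj, p, ⟨hvp, hpi⟩, hpar⟩ | ⟨hj, p, ⟨hxp, hpx⟩, hpar⟩)
      · rcases hcomp p x hpi hxi with hpx' | hxp'
        · exact Or.inl ⟨fun h => hj ⟨h.1, h.2.trans hxi⟩, p, ⟨hvp, hpx'⟩, hpar⟩
        · exact Or.inr ⟨fun h => hj ⟨hvx.trans h.1, h.2⟩, p, ⟨hxp', hpi⟩, hpar⟩
      · have hpeq : p = x := le_antisymm hpx hxp
        subst hpeq
        have hxj : p < j := hpar.1
        by_cases hji : j ≤ i
        · exact Or.inl ⟨fun h => hxj.not_ge h.2, p, ⟨hvx, le_rfl⟩, hpar⟩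
        · exact Or.inr ⟨fun h => hji h.2, p, ⟨le_rfl, hxi⟩, hpar⟩
    · rintro (⟨hj, p, ⟨hvp, hpx⟩, hpar⟩ | ⟨hj, p, ⟨hxp, hpi⟩, hpar⟩)
      · by_cases hji : v ≤ j ∧ j ≤ i
        · have hnjx : ¬ j ≤ x := fun h => hj ⟨hji.1, h⟩
          have hxj : x < j := by
            rcases hcomp j x hji.2 hxi with h | h
            · exact absurd h hnjx
            · exact lt_of_le_of_ne h (by rintro rfl; exact hnjx le_rfl)
          have hpx' : p = x := by
            by_contra hne
            exact hpar.2 ⟨x, lt_of_le_of_ne hpx hne, hxj⟩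
          subst hpx'
          exact Or.inr ⟨fun h => hnjx h.2, p, ⟨le_rfl, le_rfl⟩, hpar⟩
        · exact Or.inl ⟨hji, p, ⟨hvp, hpx.trans hxi⟩, hpar⟩
      · refine Or.inl ⟨fun h => ?_, p, ⟨hvx.trans hxp, hpi⟩, hpar⟩
        exact hj ⟨hxp.trans hpar.1.le, h.2⟩
  have hI : branchOff v i ∩ branchOff x x = branchOff v x ∩ branchOff x i := by
    ext j
    simp only [Finset.mem_inter, mem_branchOff_iff, mem_chainCC_iff]
    constructor
    · rintro ⟨⟨hjA, p, ⟨hvp, hpi⟩, hparA⟩, ⟨hjB, q, ⟨hxq, hqx⟩, hparB⟩⟩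
      have hq : q = x := le_antisymm hqx hxq
      subst hq
      have hxj : q < j := hparB.1
      constructor
      · exact ⟨fun h => hxj.not_ge h.2, q, ⟨hvx, le_rfl⟩, hparB⟩
      · exact ⟨fun h => hjA ⟨hvx.trans h.1, h.2⟩, q, ⟨le_rfl, hxi⟩, hparB⟩
    · rintro ⟨⟨hjC, p, ⟨hvp, hpx⟩, hparC⟩, ⟨hjD, q, ⟨hxq, hqi⟩, hparD⟩⟩
      have hpq : p = q := parent_unique htree hparC hparD
      subst hpq
      have hpx' : p = x := le_antisymm hpx hxq
      subst hpx'
      constructor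
      · exact ⟨fun h => hjD ⟨hparC.1.le, h.2⟩, p, ⟨hvx, hxi⟩, hparC⟩
      · exact ⟨fun h => hparC.1.not_ge h.2, p, ⟨le_rfl, le_rfl⟩, hparC⟩
  -- sums
  have hkey : sumF F v i + sumF F x x = sumF F v x + sumF F x i := by
    unfold sumF
    rw [← Finset.sum_union_inter, hU, hI, Finset.sum_union_inter]
  -- costs
  have c1 : costF w w0 s F v i = sumF F v i + s x := by
    rw [costF, if_neg hiNotStar, ← hx]
  have c2 : costF w w0 s F x i = sumF F x i + s x := by
    rw [costF, if_neg hiNotStar_x, hnxt2]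
  have c3 : costF w w0 s F v x = sumF F v x + s x := by
    rw [costF, if_pos hxStar_v]
  have c4 : costF w w0 s F x x = sumF F x x + s x := by
    rw [costF, if_pos hxStar_x]
  exact ⟨hxStar_v, hxStar_x, hiMinus_x, hnxt2, by rw [c1, c2, c3, c4]; linarith⟩
end

section
/- Let F : V → ℝ and let v, x, i ∈ V with v < x ≤ i (so v is a proper ancestor of x, and x is an ancestor of i). Let p_x denote the parent of x. Then sum_F(v,i) − sum_F(x,i) = sum_F(v,p_x) − F(x). -/
open Finset
open scoped Classical

theorem stmt_2 (V : Type) [Fintype V] [Nonempty V] [PartialOrder V]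
    (htree : ∀ a b c : V, a ≤ c → b ≤ c → a ≤ b ∨ b ≤ a)
    (F : V → ℝ)
    (v x i : V) (hvx : v < x) (hxi : x ≤ i)
    (px : V) (hpx : IsParent px x) :
    sumF F v i - sumF F x i = sumF F v px - F x := by
  classical
  obtain ⟨hpxlt, hpxmax⟩ := hpx
  have hlepx : ∀ p : V, p < x → p ≤ px := by
    intro p hp
    rcases htree p px x hp.le hpxlt.le with h | h
    · exact h
    · rcases eq_or_lt_of_le h with h | h
      · exact h.ge
      · exact absurd ⟨p, h, hp⟩ hpxmax
  have hvpx : v ≤ px := hlepx v hvx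
  have hmem : ∀ (a b j : V), j ∈ branchOff a b ↔
      j ∉ chainCC a b ∧ ∃ p ∈ chainCC a b, IsParent p j := by
    intro a b j; simp [branchOff]
  have hcc : ∀ (a b j : V), j ∈ chainCC a b ↔ a ≤ j ∧ j ≤ b := by
    intro a b j; simp [chainCC]
  have key : branchOff v px ∪ branchOff x i = insert x (branchOff v i) := by
    ext j
    simp only [Finset.mem_union, Finset.mem_insert, hmem, hcc]
    constructor
    · rintro (⟨hj, p, ⟨hvp, hppx⟩, hpj, hpmax⟩ | ⟨hj, p, ⟨hxp, hpi⟩, hpj, hpmax⟩)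
      · by_cases hjx : j = x
        · exact Or.inl hjx
        right
        refine ⟨?_, p, ⟨hvp, hppx.trans (hpxlt.le.trans hxi)⟩, hpj, hpmax⟩
        rintro ⟨hvj, hji⟩
        rcases htree j x i hji hxi with h | h
        · exact hj ⟨hvj, hlepx j (lt_of_le_of_ne h hjx)⟩
        · have hxj : x < j := lt_of_le_of_ne h (fun hh => hjx hh.symm)
          rcases htree p x j hpj.le hxj.le with h2 | h2
          · rcases eq_or_lt_of_le h2 with h2 | h2
            · exact absurd (h2 ▸ hppx) hpxlt.not_ge
            · exact hpmax ⟨x, h2, hxj⟩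
          · exact absurd (h2.trans hppx) hpxlt.not_ge
      · right
        refine ⟨?_, p, ⟨hvx.le.trans hxp, hpi⟩, hpj, hpmax⟩
        rintro ⟨hvj, hji⟩
        rcases htree j x i hji hxi with h | h
        · have hjx : j < x := lt_of_le_of_ne h (by rintro rfl; exact hj ⟨le_rfl, hxi⟩)
          exact absurd ((hlepx j hjx).trans_lt (hpxlt.trans_le hxp)) hpj.le.not_gt
        · exact hj ⟨h, hji⟩
    · rintro (rfl | ⟨hj, p, ⟨hvp, hpi⟩, hpj, hpmax⟩)
      · exact Or.inl ⟨fun h => absurd (h.2.trans_lt hpxlt) (lt_irrefl j),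
          px, ⟨hvpx, le_rfl⟩, hpxlt, hpxmax⟩
      · rcases htree p x i hpi hxi with h | h
        · -- p ≤ x; if p = x go right, else p < x go left
          rcases eq_or_lt_of_le h with h | h
          · right
            refine ⟨?_, p, ⟨h.ge, hpi⟩, hpj, hpmax⟩
            rintro ⟨hxj, hji⟩
            exact hj ⟨hvx.le.trans hxj, hji⟩
          · left
            refine ⟨?_, p, ⟨hvp, hlepx p h⟩, hpj, hpmax⟩
            rintro ⟨hvj, hjpx⟩
            exact hj ⟨hvj, hjpx.trans (hpxlt.le.trans hxi)⟩
        · right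
          refine ⟨?_, p, ⟨h, hpi⟩, hpj, hpmax⟩
          rintro ⟨hxj, hji⟩
          exact hj ⟨hvx.le.trans hxj, hji⟩
  have hdisj : Disjoint (branchOff v px) (branchOff x i) := by
    rw [Finset.disjoint_left]
    intro j hj1 hj2
    rw [hmem] at hj1 hj2
    obtain ⟨_, p1, hp1, hp1j, hp1max⟩ := hj1
    obtain ⟨_, p2, hp2, hp2j, hp2max⟩ := hj2
    rw [hcc] at hp1 hp2
    have hpp : p1 = p2 := by
      rcases htree p1 p2 j hp1j.le hp2j.le with h | h
      · rcases eq_or_lt_of_le h with h | h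
        · exact h
        · exact absurd ⟨p2, h, hp2j⟩ hp1max
      · rcases eq_or_lt_of_le h with h | h
        · exact h.symm
        · exact absurd ⟨p1, h, hp1j⟩ hp2max
    exact absurd ((hpp ▸ hp2.1).trans hp1.2) hpxlt.not_ge
  have hxnot : x ∉ branchOff v i := by
    rw [hmem]
    rintro ⟨h, -⟩
    exact h ((hcc v i x).mpr ⟨hvx.le, hxi⟩)
  have hsum : sumF F v px + sumF F x i = F x + sumF F v i := by
    rw [sumF, sumF, ← Finset.sum_union hdisj, key, Finset.sum_insert hxnot, sumF]
  linarith
end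

section
/- Let u, v, i ∈ V with u ≤ v and v ≤ i (u is an ancestor of v, and i is a descendant of v). If i ∉ win*_v, then i ∉ win*_u. -/
open Finset
open scoped Classical

theorem stmt_8 (V : Type) [Fintype V] [Nonempty V] [PartialOrder V]
    (htree : ∀ a b c : V, a ≤ c → b ≤ c → a ≤ b ∨ b ≤ a)
    (w : V → ℝ) (s : V → ℝ) (w0 : ℝ)
    (hw : ∀ i : V, 0 ≤ w i) (hw0 : 0 ≤ w0)
    (u v i : V) (huv : u ≤ v) (hvi : v ≤ i)
    (h : i ∉ winStar w w0 s v) :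
    i ∉ winStar w w0 s u := by
  intro hu
  apply h
  simp only [winStar, win, mem_filter, mem_univ, true_and] at hu ⊢
  obtain ⟨⟨hui, hsum⟩, hle, hmax⟩ := hu
  have hsub : chainCC v i ⊆ chainCC u i := by
    intro p hp
    simp only [chainCC, mem_filter, mem_univ, true_and] at hp ⊢
    exact ⟨huv.trans hp.1, hp.2⟩
  refine ⟨⟨hvi, le_trans ?_ hsum⟩, hvi, ?_⟩
  · exact Finset.sum_le_sum_of_subset_of_nonneg hsub (fun j _ _ => hw j)
  · intro p hp
    apply hmax
    simp only [chainCO, mem_erase] at hp ⊢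
    exact ⟨hp.1, hsub hp.2⟩
end

section
/- Let c be a child of v, let x ∈ win*_c, and assume x ∈ win_v but x ∉ win*_v. Then for every i ∈ win_v with i ∈ T_c, i ≠ c, and next_c(i) = x, one has next_v(i) = v. -/
open Finset
open scoped Classical

theorem stmt_10 (V : Type) [Fintype V] [Nonempty V] [PartialOrder V]
    (htree : ∀ a b c : V, a ≤ c → b ≤ c → a ≤ b ∨ b ≤ a)
    (w : V → ℝ) (s : V → ℝ) (w0 : ℝ)
    (hw : ∀ i : V, 0 ≤ w i) (hw0 : 0 ≤ w0)
    (v c : V) (hc : IsParent v c)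
    (x : V) (hx : x ∈ winStar w w0 s c)
    (hxw : x ∈ win w w0 v) (hxs : x ∉ winStar w w0 s v) :
    ∀ i ∈ win w w0 v, c ≤ i → i ≠ c → nxt s c i = x → nxt s v i = v := by
  have memCO : ∀ a b p : V, p ∈ chainCO a b ↔ a ≤ p ∧ p ≤ b ∧ p ≠ b := by
    intro a b p
    simp [chainCO, chainCC, Finset.mem_erase, Finset.mem_filter]
    tauto
  have smax_self : ∀ a : V, SMax s a a := by
    intro a
    refine ⟨le_refl a, fun p hp => ?_⟩
    rw [memCO] at hp
    exact absurd (le_antisymm hp.2.1 hp.1) hp.2.2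
  -- existence of a greatest s-maximal element
  have exgr : ∀ a b : V, a < b →
      ∃ z ∈ chainCO a b, SMax s a z ∧ ∀ y ∈ chainCO a b, SMax s a y → y ≤ z := by
    intro a b hab
    set S := (chainCO a b).filter (fun y => SMax s a y) with hS
    have haS : a ∈ S := by
      rw [hS, Finset.mem_filter, memCO]
      exact ⟨⟨le_refl a, le_of_lt hab, ne_of_lt hab⟩, smax_self a⟩
    obtain ⟨m, hmS, hmax'⟩ := Finset.exists_maximal (s := S) ⟨a, haS⟩
    have hmS : m ∈ S := hmS
    have hmax : ∀ y ∈ S, ¬ m < y := fun y hy hlt => hlt.not_ge (hmax' hy hlt.le)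
    rw [hS, Finset.mem_filter] at hmS
    refine ⟨m, hmS.1, hmS.2, fun y hy hySM => ?_⟩
    have hyS : y ∈ S := by rw [hS, Finset.mem_filter]; exact ⟨hy, hySM⟩
    have hyb : y ≤ b := ((memCO a b y).1 hy).2.1
    have hmb : m ≤ b := ((memCO a b m).1 hmS.1).2.1
    rcases htree y m b hyb hmb with h | h
    · exact h
    · by_contra hne
      exact hmax y hyS (lt_of_le_of_ne h (fun he => hne (he ▸ le_refl m)))
  -- characterization of nxt
  have nxt_eq : ∀ a b z : V, z ∈ chainCO a b → SMax s a z →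
      (∀ y ∈ chainCO a b, SMax s a y → y ≤ z) → nxt s a b = z := by
    intro a b z hz hzSM hgr
    have hcond : ∃ u ∈ chainCO a b, SMax s a u ∧ ∀ y ∈ chainCO a b, SMax s a y → y ≤ u :=
      ⟨z, hz, hzSM, hgr⟩
    rw [nxt, dif_pos hcond]
    obtain ⟨h1, h2, h3⟩ := hcond.choose_spec
    exact le_antisymm (hgr _ h1 h2) (h3 z hz hzSM)
  intro i hi hci hic hnc
  have hvc : v < c := hc.1
  have hcilt : c < i := lt_of_le_of_ne hci (Ne.symm hic)
  have hvi : v < i := lt_trans hvc hcilt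
  -- x is the greatest s-maximal element of T[c,i)
  obtain ⟨z, hz, hzSM, hzgr⟩ := exgr c i hcilt
  have hzx : z = x := by rw [← hnc, nxt_eq c i z hz hzSM hzgr]
  subst hzx
  -- facts about x
  rw [winStar, Finset.mem_filter] at hx hxs
  have hxSMc : SMax s c z := hx.2
  have hvx : v ≤ z := by
    rw [win, Finset.mem_filter] at hxw; exact hxw.2.1
  have hnotSM : ¬ SMax s v z := fun h => hxs ⟨hxw, h⟩
  -- there is p ∈ T[v,z) with s z ≤ s p
  have hpex : ∃ p ∈ chainCO v z, s z ≤ s p := by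
    by_contra hno
    push_neg at hno
    exact hnotSM ⟨hvx, fun p hp => hno p hp⟩
  obtain ⟨p, hp, hsp⟩ := hpex
  rw [memCO] at hp
  -- apply characterization with witness v
  apply nxt_eq v i v
  · rw [memCO]; exact ⟨le_refl v, le_of_lt hvi, ne_of_lt hvi⟩
  · exact smax_self v
  · intro y hy hySM
    rw [memCO] at hy
    by_contra hyv
    have hyv' : y ≠ v := fun h => hyv (h ▸ le_refl v)
    -- c ≤ y
    have hcy : c ≤ y := by
      rcases htree y c i hy.2.1 (le_of_lt hcilt) with h | h
      · rcases lt_or_eq_of_le h with h' | h'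
        · exact absurd ⟨y, lt_of_le_of_ne hy.1 (Ne.symm hyv'), h'⟩ hc.2
        · exact le_of_eq h'.symm
      · exact h
    -- y is s-maximal in T_c
    have hySMc : SMax s c y := by
      refine ⟨hcy, fun q hq => ?_⟩
      rw [memCO] at hq
      exact hySM.2 q ((memCO v y q).2 ⟨le_trans (le_of_lt hvc) hq.1, hq.2.1, hq.2.2⟩)
    have hyci : y ∈ chainCO c i := (memCO c i y).2 ⟨hcy, hy.2.1, hy.2.2⟩
    have hyx : y ≤ z := hzgr y hyci hySMc
    rcases lt_or_eq_of_le hyx with hyltx | hyeqx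
    · -- y < z : get contradiction via p
      have hsyx : s y < s z := hxSMc.2 y ((memCO c z y).2 ⟨hcy, le_of_lt hyltx, ne_of_lt hyltx⟩)
      rcases htree p y z (le_of_lt (lt_of_le_of_ne hp.2.1 hp.2.2)) (le_of_lt hyltx) with h | h
      · rcases lt_or_eq_of_le h with h' | h'
        · have : s p < s y := hySM.2 p ((memCO v y p).2 ⟨hp.1, le_of_lt h', ne_of_lt h'⟩)
          exact absurd hsp (not_le.mpr (lt_trans this hsyx))
        · subst h'; exact absurd hsp (not_le.mpr hsyx)
      · have hcp : c ≤ p := le_trans hcy h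
        have : s p < s z := hxSMc.2 p ((memCO c z p).2 ⟨hcp, hp.2.1, hp.2.2⟩)
        exact absurd hsp (not_le.mpr this)
    · exact hnotSM (hyeqx ▸ hySM)
end

section
/- Let c be a child of v and let x ∈ T_c with x ≠ c. If x is s-maximal in T_c but not s-maximal in T_v, then next_c(x) is not s-maximal in T_v either. -/
open Finset
open scoped Classical

theorem stmt_11 (V : Type) [Fintype V] [Nonempty V] [PartialOrder V]
    (htree : ∀ a b c : V, a ≤ c → b ≤ c → a ≤ b ∨ b ≤ a)
    (w : V → ℝ) (s : V → ℝ) (w0 : ℝ)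
    (hw : ∀ i : V, 0 ≤ w i) (hw0 : 0 ≤ w0)
    (v c : V) (hc : IsParent v c)
    (x : V) (hx : c ≤ x) (hxc : x ≠ c)
    (h1 : SMax s c x) (h2 : ¬ SMax s v x) :
    ¬ SMax s v (nxt s c x) := by
  have hvc : v < c := hc.1
  have hvx : v ≤ x := le_trans hvc.le hx
  have hcx : c < x := lt_of_le_of_ne hx (Ne.symm hxc)
  have hcmem : c ∈ chainCO c x := by
    simp [chainCO, chainCC, hx, Ne.symm hxc]
  -- s x ≤ s v
  have hsvx : s x ≤ s v := by
    by_contra hlt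
    push_neg at hlt
    apply h2
    refine ⟨hvx, fun p hp => ?_⟩
    simp only [chainCO, chainCC, mem_erase, mem_filter, mem_univ, true_and] at hp
    obtain ⟨hpx, hvp, hpxle⟩ := hp
    rcases htree p c x hpxle hx with hpc | hcp
    · rcases eq_or_lt_of_le hpc with heq | hpc'
      · exact heq ▸ h1.2 c hcmem
      · -- v ≤ p < c, parent forces p = v
        rcases eq_or_lt_of_le hvp with rfl | hvp'
        · exact hlt
        · exact absurd ⟨p, hvp', hpc'⟩ hc.2
    · exact h1.2 p (by simp [chainCO, chainCC, hcp, hpxle, hpx])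
  -- existence of the greatest s-maximal element of T[c,x)
  have hex : ∃ y ∈ chainCO c x, SMax s c y ∧ ∀ z ∈ chainCO c x, SMax s c z → z ≤ y := by
    have hcmax : SMax s c c := by
      refine ⟨le_rfl, fun p hp => ?_⟩
      simp only [chainCO, chainCC, mem_erase, mem_filter, mem_univ, true_and] at hp
      exact absurd (le_antisymm hp.2.2 hp.2.1) hp.1
    have hS : ((chainCO c x).filter (fun y => SMax s c y)).Nonempty :=
      ⟨c, by simp [hcmem, hcmax]⟩
    obtain ⟨a, ha, hamax⟩ : ∃ m ∈ (chainCO c x).filter (fun y => SMax s c y),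
        ∀ z ∈ (chainCO c x).filter (fun y => SMax s c y), ¬ m < z := by
      obtain ⟨m, hm⟩ := Finset.exists_maximal hS
      exact ⟨m, hm.prop, fun z hz hlt => hlt.not_ge (hm.le_of_ge hz hlt.le)⟩
    simp only [mem_filter] at ha
    refine ⟨a, ha.1, ha.2, fun z hz hzmax => ?_⟩
    have haz : a ≤ x := by
      simp only [chainCO, chainCC, mem_erase, mem_filter, mem_univ, true_and] at ha
      exact ha.1.2.2
    have hzx : z ≤ x := by
      simp only [chainCO, chainCC, mem_erase, mem_filter, mem_univ, true_and] at hz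
      exact hz.2.2
    rcases htree z a x hzx haz with h | h
    · exact h
    · rcases eq_or_lt_of_le h with rfl | h'
      · exact le_rfl
      · exact absurd h' (hamax z (by simp [hz, hzmax]))
  rw [nxt, dif_pos hex]
  obtain ⟨hmem, hsmax, -⟩ := hex.choose_spec
  set u := hex.choose
  intro hu
  simp only [chainCO, chainCC, mem_erase, mem_filter, mem_univ, true_and] at hmem
  have hux : u < x := lt_of_le_of_ne hmem.2.2 hmem.1
  have hsu : s u < s x := h1.2 u (by simp [chainCO, chainCC, hmem.1, hmem.2.1, hmem.2.2])
  have hvu : v < u := lt_of_lt_of_le hvc hmem.2.1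
  have hsv : s v < s u := hu.2 v (by simp [chainCO, chainCC, hvu.le, hvu.ne])
  linarith
end

section
/- Let v ∈ V and i ∈ T_v. If i is r-maximal in T_v, then i is the dominant vertex of the chain T[v,i] (i.e., r_i = max_{p ∈ T[v,i]} r_p). If i ≠ v and i is not r-maximal in T_v, then nextʳ_v(i) is the dominant vertex of the chain T[v,i] (i.e., r_{nextʳ_v(i)} = max_{p ∈ T[v,i]} r_p). -/
open Finset
open scoped Classical

/-- In the generalized problem, `u` is r-maximal in `T_v` iff it is "s-maximal"
with respect to the rank function `r`, and `nextʳ_v(u) = nxt r v u`. -/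
theorem stmt_16 (V : Type) [Fintype V] [Nonempty V] [PartialOrder V]
    (htree : ∀ a b c : V, a ≤ c → b ≤ c → a ≤ b ∨ b ≤ a)
    (r : V → ℝ) (hr : Function.Injective r)
    (v i : V) (hvi : v ≤ i) :
    (SMax r v i → r i = sSup (r '' {p : V | v ≤ p ∧ p ≤ i})) ∧
    (i ≠ v → ¬ SMax r v i →
      r (nxt r v i) = sSup (r '' {p : V | v ≤ p ∧ p ≤ i})) := by
  classical
  have hset : {p : V | v ≤ p ∧ p ≤ i} = ↑(chainCC v i) := by
    ext p; simp [chainCC]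
  have hiC : i ∈ chainCC v i := by simp [chainCC, hvi]
  have hne : (chainCC v i).Nonempty := ⟨i, hiC⟩
  have hne' : ((chainCC v i).image r).Nonempty := hne.image r
  have hsup : sSup (r '' {p : V | v ≤ p ∧ p ≤ i}) = ((chainCC v i).image r).max' hne' := by
    rw [hset, ← Finset.coe_image]
    exact hne'.csSup_eq_max'
  obtain ⟨m, hm, hmax⟩ := (chainCC v i).exists_max_image r hne
  have hmax' : ((chainCC v i).image r).max' hne' = r m := by
    apply le_antisymm
    · apply Finset.max'_le; intro y hy
      simp only [Finset.mem_image] at hy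
      obtain ⟨p, hp, rfl⟩ := hy; exact hmax p hp
    · exact Finset.le_max' _ _ (Finset.mem_image_of_mem r hm)
  rw [hsup, hmax']
  have hmemC : ∀ j p : V, p ∈ chainCC v j ↔ v ≤ p ∧ p ≤ j := by
    intro j p; simp [chainCC]
  have hmemO : ∀ j p : V, p ∈ chainCO v j ↔ p ≠ j ∧ v ≤ p ∧ p ≤ j := by
    intro j p
    simp only [chainCO, Finset.mem_erase, hmemC]
  obtain ⟨hvm, hmi⟩ := (hmemC i m).1 hm
  constructor
  · intro hS
    rcases eq_or_ne m i with h | h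
    · rw [h]
    · have hmO : m ∈ chainCO v i := (hmemO i m).2 ⟨h, hvm, hmi⟩
      have h1 := hS.2 m hmO
      have h2 := hmax i hiC
      linarith
  · intro hni hnS
    have hmni : m ≠ i := by
      intro h; subst h
      refine hnS ⟨hvm, fun p hp => ?_⟩
      obtain ⟨hpm, hvp, hpm'⟩ := (hmemO m p).1 hp
      exact lt_of_le_of_ne (hmax p ((hmemC m p).2 ⟨hvp, hpm'⟩)) (fun he => hpm (hr he))
    have hmO : m ∈ chainCO v i := (hmemO i m).2 ⟨hmni, hvm, hmi⟩
    have hmS : SMax r v m := by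
      refine ⟨hvm, fun p hp => ?_⟩
      obtain ⟨hpm, hvp, hpm'⟩ := (hmemO m p).1 hp
      exact lt_of_le_of_ne (hmax p ((hmemC i p).2 ⟨hvp, hpm'.trans hmi⟩))
        (fun he => hpm (hr he))
    have hgr : ∀ y ∈ chainCO v i, SMax r v y → y ≤ m := by
      intro y hy hyS
      obtain ⟨hyi, hvy, hyi'⟩ := (hmemO i y).1 hy
      rcases htree m y i hmi hyi' with h | h
      · rcases eq_or_ne m y with he | he
        · exact he.ge
        · have : m ∈ chainCO v y := (hmemO y m).2 ⟨he, hvm, h⟩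
          have h1 := hyS.2 m this
          have h2 := hmax y ((hmemC i y).2 ⟨hvy, hyi'⟩)
          linarith
      · exact h
    have hex : ∃ x ∈ chainCO v i, SMax r v x ∧ ∀ y ∈ chainCO v i, SMax r v y → y ≤ x :=
      ⟨m, hmO, hmS, hgr⟩
    have hnxt : nxt r v i = hex.choose := by
      rw [nxt, dif_pos hex]
    obtain ⟨hcO, hcS, hcgr⟩ := hex.choose_spec
    have h1 : hex.choose ≤ m := hgr _ hcO hcS
    have h2 : m ≤ hex.choose := hcgr m hmO hmS
    rw [hnxt, le_antisymm h1 h2]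
end

section
/- Let v ∈ V, let i ∈ winʳ⁻_v, and let x = nextʳ_v(i). Then i ∈ winʳ⁻_x and nextʳ_x(i) = x, and for every function F : V → ℝ, costʳ_F(v,i) − costʳ_F(x,i) = costʳ_F(v,x) − costʳ_F(x,x). -/
open Finset
open scoped Classical

noncomputable section

variable {V : Type} [Fintype V] [PartialOrder V]

/-- `winʳ*_v`: the r-maximal vertices of the window of `v`
(r-maximality is `SMax` with respect to the rank function `r`). -/
def winStarR (w : V → ℝ) (w0 : ℝ) (r : V → ℝ) (v : V) : Finset V :=
  (win w w0 v).filter (fun i => SMax r v i)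

/-- `winʳ⁻_v = win_v \ winʳ*_v`. -/
def winMinusR (w : V → ℝ) (w0 : ℝ) (r : V → ℝ) (v : V) : Finset V :=
  win w w0 v \ winStarR w w0 r v

/-- `costʳ_F(v,i)`: `sum_F(v,i) + s_i` if `i ∈ winʳ*_v`, and
`sum_F(v,i) + s_{nextʳ_v(i)}` otherwise (in particular for `i ∈ winʳ⁻_v`);
here `nextʳ_v = nxt r v`. -/
def costR (w : V → ℝ) (w0 : ℝ) (s r : V → ℝ) (F : V → ℝ) (v i : V) : ℝ :=
  if i ∈ winStarR w w0 r v then sumF F v i + s i else sumF F v i + s (nxt r v i)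

end

theorem stmt_17 (V : Type) [Fintype V] [Nonempty V] [PartialOrder V]
    (htree : ∀ a b c : V, a ≤ c → b ≤ c → a ≤ b ∨ b ≤ a)
    (w : V → ℝ) (s : V → ℝ) (w0 : ℝ)
    (hw : ∀ i : V, 0 ≤ w i) (hw0 : 0 ≤ w0)
    (r : V → ℝ) (hr : Function.Injective r)
    (v i : V) (hi : i ∈ winMinusR w w0 r v)
    (x : V) (hx : x = nxt r v i) :
    i ∈ winMinusR w w0 r x ∧ nxt r x i = x ∧
    ∀ F : V → ℝ,
      costR w w0 s r F v i - costR w w0 s r F x i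
        = costR w w0 s r F v x - costR w w0 s r F x x := by
  classical
  have mem_cc : ∀ a b p : V, p ∈ chainCC a b ↔ a ≤ p ∧ p ≤ b := by
    intro a b p; simp [chainCC]
  have mem_co : ∀ a b p : V, p ∈ chainCO a b ↔ p ≠ b ∧ a ≤ p ∧ p ≤ b := by
    intro a b p; simp [chainCO, chainCC, Finset.mem_erase]
  obtain ⟨hiw, hins⟩ := Finset.mem_sdiff.mp hi
  have hwin : v ≤ i ∧ ∑ j ∈ chainCC v i, w j ≤ w0 := by
    simpa [win] using hiw
  obtain ⟨hvi, hsum⟩ := hwin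
  have hnsmax : ¬ SMax r v i := fun h => hins (Finset.mem_filter.mpr ⟨hiw, h⟩)
  -- trivial SMax at the root of a subtree
  have smax_self : ∀ a : V, SMax r a a := by
    intro a
    refine ⟨le_refl a, fun p hp => ?_⟩
    rw [mem_co] at hp
    exact absurd (le_antisymm hp.2.2 hp.2.1) hp.1
  have hvne : v ≠ i := by
    intro h; exact hnsmax (h ▸ smax_self v)
  -- existence of the greatest r-maximal element of T[v,i)
  have h : ∃ y ∈ chainCO v i, SMax r v y ∧
      ∀ z ∈ chainCO v i, SMax r v z → z ≤ y := by
    set S : Finset V := (chainCO v i).filter (fun u => SMax r v u) with hS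
    have hSne : S.Nonempty := ⟨v, by
      refine Finset.mem_filter.mpr ⟨?_, smax_self v⟩
      rw [mem_co]; exact ⟨hvne, le_refl v, hvi⟩⟩
    obtain ⟨m, hmS, hmmax⟩ := S.exists_maximal hSne
    refine ⟨m, (Finset.mem_filter.mp hmS).1, (Finset.mem_filter.mp hmS).2, ?_⟩
    intro z hz hzs
    have hzS : z ∈ S := Finset.mem_filter.mpr ⟨hz, hzs⟩
    have hmi : m ≤ i := ((mem_co v i m).mp (Finset.mem_filter.mp hmS).1).2.2
    have hzi : z ≤ i := ((mem_co v i z).mp hz).2.2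
    rcases htree z m i hzi hmi with h1 | h1
    · exact h1
    · rcases lt_or_eq_of_le h1 with h2 | h2
      · exact absurd (lt_of_lt_of_le h2 (hmmax hzS h1)) (lt_irrefl m)
      · exact h2.ge
  have hxdef : x = h.choose := by
    rw [hx]; unfold nxt; rw [dif_pos h]
  obtain ⟨hx1, hx2, hx3⟩ := h.choose_spec
  rw [← hxdef] at hx1 hx2 hx3
  obtain ⟨hxnei, hvx, hxi⟩ := (mem_co v i x).mp hx1
  -- rank of x is larger than rank of i
  have hrxi : r i < r x := by
    obtain ⟨m, hm, hmmax⟩ := (chainCC v i).exists_max_image r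
      ⟨i, (mem_cc v i i).mpr ⟨hvi, le_refl i⟩⟩
    obtain ⟨hvm, hmi⟩ := (mem_cc v i m).mp hm
    have hmne : m ≠ i := by
      intro he
      apply hnsmax
      refine ⟨hvi, fun p hp => ?_⟩
      obtain ⟨hpne, hvp, hpi⟩ := (mem_co v i p).mp hp
      have hle : r p ≤ r i := he ▸ hmmax p ((mem_cc v i p).mpr ⟨hvp, hpi⟩)
      exact lt_of_le_of_ne hle (fun hre => hpne (hr hre))
    have hsm : SMax r v m := by
      refine ⟨hvm, fun p hp => ?_⟩
      obtain ⟨hpne, hvp, hpm⟩ := (mem_co v m p).mp hp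
      have hle : r p ≤ r m := hmmax p ((mem_cc v i p).mpr ⟨hvp, hpm.trans hmi⟩)
      exact lt_of_le_of_ne hle (fun hre => hpne (hr hre))
    have hmx : m ≤ x := hx3 m ((mem_co v i m).mpr ⟨hmne, hvm, hmi⟩) hsm
    have him : r i < r m := lt_of_le_of_ne
      (hmmax i ((mem_cc v i i).mpr ⟨hvi, le_refl i⟩))
      (fun hre => hmne (hr hre).symm)
    rcases eq_or_lt_of_le hmx with h1 | h1
    · exact h1 ▸ him
    · exact him.trans (hx2.2 m ((mem_co v x m).mpr ⟨h1.ne, hvm, hmx⟩))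
  have hxlti : x < i := lt_of_le_of_ne hxi hxnei
  have hxco : x ∈ chainCO x i := (mem_co x i x).mpr ⟨hxnei, le_refl x, hxi⟩
  have hnsmaxx : ¬ SMax r x i := fun hs => absurd (hs.2 x hxco) (not_lt.mpr hrxi.le)
  -- sum bound for subtrees
  have hsumsub : ∀ a b : V, chainCC a b ⊆ chainCC v i → ∑ j ∈ chainCC a b, w j ≤ w0 :=
    fun a b hsub => le_trans
      (Finset.sum_le_sum_of_subset_of_nonneg hsub (fun j _ _ => hw j)) hsum
  have hwinxi : i ∈ win w w0 x := by
    simp only [win, Finset.mem_filter, Finset.mem_univ, true_and]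
    refine ⟨hxi, hsumsub x i ?_⟩
    intro p hp; rw [mem_cc] at hp ⊢; exact ⟨hvx.trans hp.1, hp.2⟩
  have hgoal1 : i ∈ winMinusR w w0 r x := by
    rw [winMinusR, Finset.mem_sdiff]
    exact ⟨hwinxi, fun hm => hnsmaxx (Finset.mem_filter.mp hm).2⟩
  have hinsx : i ∉ winStarR w w0 r x :=
    fun hm => hnsmaxx (Finset.mem_filter.mp hm).2
  -- x is the greatest r-maximal element of T[x,i)
  have hgr : ∀ z ∈ chainCO x i, SMax r x z → z ≤ x := by
    intro z hz hzs
    obtain ⟨hzne, hxz, hzi⟩ := (mem_co x i z).mp hz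
    rcases eq_or_lt_of_le hxz with h1 | h1
    · exact h1.ge
    · have hxcz : x ∈ chainCO x z := (mem_co x z x).mpr ⟨h1.ne, le_refl x, hxz⟩
      have hrxz : r x < r z := hzs.2 x hxcz
      have hsv : SMax r v z := by
        refine ⟨hvx.trans hxz, fun p hp => ?_⟩
        obtain ⟨hpne, hvp, hpz⟩ := (mem_co v z p).mp hp
        rcases htree p x z hpz hxz with h2 | h2
        · rcases eq_or_lt_of_le h2 with h3 | h3
          · exact h3 ▸ hrxz
          · exact (hx2.2 p ((mem_co v x p).mpr ⟨h3.ne, hvp, h2⟩)).trans hrxz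
        · exact hzs.2 p ((mem_co x z p).mpr ⟨hpne, h2, hpz⟩)
      exact hx3 z ((mem_co v i z).mpr ⟨hzne, hvx.trans hxz, hzi⟩) hsv
  have h2ex : ∃ y ∈ chainCO x i, SMax r x y ∧
      ∀ z ∈ chainCO x i, SMax r x z → z ≤ y :=
    ⟨x, hxco, smax_self x, hgr⟩
  have hgoal2 : nxt r x i = x := by
    have hd : nxt r x i = h2ex.choose := by unfold nxt; rw [dif_pos h2ex]
    obtain ⟨hc1, hc2, hc3⟩ := h2ex.choose_spec
    rw [hd]
    exact le_antisymm (hgr _ hc1 hc2) (hc3 x hxco (smax_self x))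
  -- x ∈ winStarR v and x ∈ winStarR x
  have hxstarv : x ∈ winStarR w w0 r v := by
    refine Finset.mem_filter.mpr ⟨?_, hx2⟩
    simp only [win, Finset.mem_filter, Finset.mem_univ, true_and]
    refine ⟨hvx, hsumsub v x ?_⟩
    intro p hp; rw [mem_cc] at hp ⊢; exact ⟨hp.1, hp.2.trans hxi⟩
  have hxstarx : x ∈ winStarR w w0 r x := by
    refine Finset.mem_filter.mpr ⟨?_, smax_self x⟩
    simp only [win, Finset.mem_filter, Finset.mem_univ, true_and]
    refine ⟨le_refl x, hsumsub x x ?_⟩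
    intro p hp; rw [mem_cc] at hp ⊢; exact ⟨hvx.trans hp.1, hp.2.trans hxi⟩
  refine ⟨hgoal1, hgoal2, ?_⟩
  intro F
  have e1 : costR w w0 s r F v i = sumF F v i + s x := by
    rw [costR, if_neg hins, ← hx]
  have e2 : costR w w0 s r F x i = sumF F x i + s x := by
    rw [costR, if_neg hinsx, hgoal2]
  have e3 : costR w w0 s r F v x = sumF F v x + s x := by
    rw [costR, if_pos hxstarv]
  have e4 : costR w w0 s r F x x = sumF F x x + s x := by
    rw [costR, if_pos hxstarx]
  rw [e1, e2, e3, e4]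
  -- reduces to an identity on branchOff sums
  have key : sumF F v i + sumF F x x = sumF F v x + sumF F x i := by
    have hrw : ∀ a b : V, sumF F a b =
        ∑ j ∈ (univ : Finset V), if (j ∉ chainCC a b ∧ ∃ p ∈ chainCC a b, IsParent p j)
          then F j else 0 := by
      intro a b; rw [sumF, branchOff, Finset.sum_filter]
    rw [hrw v i, hrw x x, hrw v x, hrw x i, ← Finset.sum_add_distrib,
      ← Finset.sum_add_distrib]
    apply Finset.sum_congr rfl
    intro j _
    by_cases hpar : ∃ p : V, IsParent p j
    · obtain ⟨p, hp⟩ := hpar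
      have huniq : ∀ q : V, IsParent q j → q = p := by
        intro q hq
        rcases htree q p j hq.1.le hp.1.le with h1 | h1
        · rcases eq_or_lt_of_le h1 with h2 | h2
          · exact h2
          · exact absurd ⟨p, h2, hp.1⟩ hq.2
        · rcases eq_or_lt_of_le h1 with h2 | h2
          · exact h2.symm
          · exact absurd ⟨q, h2, hq.1⟩ hp.2
      have keyiff : ∀ t : Finset V, (∃ q ∈ t, IsParent q j) ↔ p ∈ t := by
        intro t
        constructor
        · rintro ⟨q, hqt, hqp⟩; exact (huniq q hqp) ▸ hqt
        · intro ht; exact ⟨p, ht, hp⟩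
      by_cases hpc : p ∈ chainCC v i
      · obtain ⟨hvp, hpi⟩ := (mem_cc v i p).mp hpc
        have hpj : p < j := hp.1
        have hvj : v ≤ j := hvp.trans hpj.le
        rcases htree p x i hpi hxi with hcase | hcase
        · rcases eq_or_lt_of_le hcase with hpx | hpx
          · -- p = x : the parent is x itself
            subst hpx
            have hA2 : j ∉ chainCC p p ∧ ∃ q ∈ chainCC p p, IsParent q j := by
              constructor
              · rw [mem_cc]; rintro ⟨h1, h2⟩
                exact absurd (le_antisymm h2 h1) hpj.ne'
              · exact (keyiff _).mpr ((mem_cc p p p).mpr ⟨le_refl p, le_refl p⟩)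
            have hA3 : j ∉ chainCC v p ∧ ∃ q ∈ chainCC v p, IsParent q j := by
              constructor
              · rw [mem_cc]; rintro ⟨h1, h2⟩
                exact absurd (le_antisymm h2 hpj.le) hpj.ne'
              · exact (keyiff _).mpr ((mem_cc v p p).mpr ⟨hvp, le_refl p⟩)
            rw [if_pos hA2, if_pos hA3]
            by_cases hji : j ≤ i
            · have hj1 : j ∈ chainCC v i := (mem_cc v i j).mpr ⟨hvj, hji⟩
              have hj2 : j ∈ chainCC p i := (mem_cc p i j).mpr ⟨hpj.le, hji⟩
              rw [if_neg (fun hA => hA.1 hj1), if_neg (fun hA => hA.1 hj2)]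
              ring
            · have hj1 : j ∉ chainCC v i := fun hm => hji ((mem_cc v i j).mp hm).2
              have hj2 : j ∉ chainCC p i := fun hm => hji ((mem_cc p i j).mp hm).2
              rw [if_pos ⟨hj1, (keyiff _).mpr hpc⟩,
                if_pos ⟨hj2, (keyiff _).mpr ((mem_cc p i p).mpr ⟨le_refl p, hpi⟩)⟩]
          · -- p < x
            have hA2 : ¬ (j ∉ chainCC x x ∧ ∃ q ∈ chainCC x x, IsParent q j) := by
              rintro ⟨_, hq⟩
              have := (keyiff _).mp hq
              obtain ⟨h1, h2⟩ := (mem_cc x x p).mp this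
              exact hpx.ne' (le_antisymm h2 h1).symm
            have hA4 : ¬ (j ∉ chainCC x i ∧ ∃ q ∈ chainCC x i, IsParent q j) := by
              rintro ⟨_, hq⟩
              have := (keyiff _).mp hq
              obtain ⟨h1, h2⟩ := (mem_cc x i p).mp this
              exact absurd (le_antisymm hpx.le h1) hpx.ne
            rw [if_neg hA2, if_neg hA4, add_zero, add_zero]
            by_cases hjx : j ≤ x
            · have hj1 : j ∈ chainCC v i := (mem_cc v i j).mpr ⟨hvj, hjx.trans hxi⟩
              have hj2 : j ∈ chainCC v x := (mem_cc v x j).mpr ⟨hvj, hjx⟩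
              rw [if_neg (fun hA => hA.1 hj1), if_neg (fun hA => hA.1 hj2)]
            · have hj2 : j ∉ chainCC v x := fun hm => hjx ((mem_cc v x j).mp hm).2
              have hj1 : j ∉ chainCC v i := by
                intro hm
                have hji : j ≤ i := ((mem_cc v i j).mp hm).2
                rcases htree j x i hji hxi with h1 | h1
                · exact hjx h1
                · rcases eq_or_lt_of_le h1 with h2 | h2
                  · exact hjx h2.ge
                  · exact hp.2 ⟨x, hpx, h2⟩
              rw [if_pos ⟨hj1, (keyiff _).mpr hpc⟩,
                if_pos ⟨hj2, (keyiff _).mpr ((mem_cc v x p).mpr ⟨hvp, hpx.le⟩)⟩]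
        · -- x ≤ p
          rcases eq_or_lt_of_le hcase with hpx | hpx
          · -- x = p again (handle identically)
            replace hpx := hpx.symm
            subst hpx
            have hA2 : j ∉ chainCC p p ∧ ∃ q ∈ chainCC p p, IsParent q j := by
              constructor
              · rw [mem_cc]; rintro ⟨h1, h2⟩
                exact absurd (le_antisymm h2 h1) hpj.ne'
              · exact (keyiff _).mpr ((mem_cc p p p).mpr ⟨le_refl p, le_refl p⟩)
            have hA3 : j ∉ chainCC v p ∧ ∃ q ∈ chainCC v p, IsParent q j := by
              constructor
              · rw [mem_cc]; rintro ⟨h1, h2⟩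
                exact absurd (le_antisymm h2 hpj.le) hpj.ne'
              · exact (keyiff _).mpr ((mem_cc v p p).mpr ⟨hvp, le_refl p⟩)
            rw [if_pos hA2, if_pos hA3]
            by_cases hji : j ≤ i
            · have hj1 : j ∈ chainCC v i := (mem_cc v i j).mpr ⟨hvj, hji⟩
              have hj2 : j ∈ chainCC p i := (mem_cc p i j).mpr ⟨hpj.le, hji⟩
              rw [if_neg (fun hA => hA.1 hj1), if_neg (fun hA => hA.1 hj2)]
              ring
            · have hj1 : j ∉ chainCC v i := fun hm => hji ((mem_cc v i j).mp hm).2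
              have hj2 : j ∉ chainCC p i := fun hm => hji ((mem_cc p i j).mp hm).2
              rw [if_pos ⟨hj1, (keyiff _).mpr hpc⟩,
                if_pos ⟨hj2, (keyiff _).mpr ((mem_cc p i p).mpr ⟨le_refl p, hpi⟩)⟩]
          · -- x < p
            have hA2 : ¬ (j ∉ chainCC x x ∧ ∃ q ∈ chainCC x x, IsParent q j) := by
              rintro ⟨_, hq⟩
              have := (keyiff _).mp hq
              obtain ⟨h1, h2⟩ := (mem_cc x x p).mp this
              exact absurd (le_antisymm h2 h1) hpx.ne'
            have hA3 : ¬ (j ∉ chainCC v x ∧ ∃ q ∈ chainCC v x, IsParent q j) := by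
              rintro ⟨_, hq⟩
              have := (keyiff _).mp hq
              obtain ⟨h1, h2⟩ := (mem_cc v x p).mp this
              exact absurd (le_antisymm h2 hpx.le) hpx.ne'
            rw [if_neg hA2, if_neg hA3, add_zero, zero_add]
            have hxj : x ≤ j := hpx.le.trans hpj.le
            by_cases hji : j ≤ i
            · have hj1 : j ∈ chainCC v i := (mem_cc v i j).mpr ⟨hvj, hji⟩
              have hj2 : j ∈ chainCC x i := (mem_cc x i j).mpr ⟨hxj, hji⟩
              rw [if_neg (fun hA => hA.1 hj1), if_neg (fun hA => hA.1 hj2)]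
            · have hj1 : j ∉ chainCC v i := fun hm => hji ((mem_cc v i j).mp hm).2
              have hj2 : j ∉ chainCC x i := fun hm => hji ((mem_cc x i j).mp hm).2
              rw [if_pos ⟨hj1, (keyiff _).mpr hpc⟩,
                if_pos ⟨hj2, (keyiff _).mpr ((mem_cc x i p).mpr ⟨hpx.le, hpi⟩)⟩]
      · -- parent not in the big chain: all four sets miss j
        have hsub : ∀ a b : V, chainCC a b ⊆ chainCC v i →
            ¬ (j ∉ chainCC a b ∧ ∃ q ∈ chainCC a b, IsParent q j) := by
          rintro a b hsub ⟨_, hq⟩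
          exact hpc (hsub ((keyiff _).mp hq))
        rw [if_neg (hsub v i (fun _ h => h)),
          if_neg (hsub x x (fun q hq => by
            rw [mem_cc] at hq ⊢; exact ⟨hvx.trans hq.1, hq.2.trans hxi⟩)),
          if_neg (hsub v x (fun q hq => by
            rw [mem_cc] at hq ⊢; exact ⟨hq.1, hq.2.trans hxi⟩)),
          if_neg (hsub x i (fun q hq => by
            rw [mem_cc] at hq ⊢; exact ⟨hvx.trans hq.1, hq.2⟩))]
    · -- j has no parent at all
      have hnone : ∀ a b : V, ¬ (j ∉ chainCC a b ∧ ∃ q ∈ chainCC a b, IsParent q j) := by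
        rintro a b ⟨_, q, _, hq⟩
        exact hpar ⟨q, hq⟩
      rw [if_neg (hnone v i), if_neg (hnone x x), if_neg (hnone v x), if_neg (hnone x i)]
  linarith [key]
end
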